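/- arXiv:2202.03598 — 2 statements merged into one kernel-verified Lean document; each statement's English description precedes it below -/
import Mathlib

section
/- Let Ω be a convex domain (open bounded convex set) in ℝⁿ, let x ∈ Ω, and let 0 < r < R. Then vol(B(x,r) ∩ Ω) / vol(B(x,R) ∩ Ω) ≥ (r/R)ⁿ, where vol denotes Lebesgue measure and B(x,s) is the closed ball of radius s centered at x. -/
open MeasureTheory Metric Set

/-- Bishop–Gromov type inequality for convex domains in ℝⁿ:
the volume ratio of concentric ball intersections is at least `(r/R)^n`. -/
theorem convex_volume_ratio_ge (n : ℕ) (Ω : Set (EuclideanSpace ℝ (Fin n)))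
    (hΩo : IsOpen Ω) (hΩc : Convex ℝ Ω) (hΩb : Bornology.IsBounded Ω)
    (x : EuclideanSpace ℝ (Fin n)) (hx : x ∈ Ω) (r R : ℝ) (hr : 0 < r) (hrR : r < R) :
    ENNReal.ofReal ((r / R) ^ n) ≤
      volume (closedBall x r ∩ Ω) / volume (closedBall x R ∩ Ω) := by
  have hR : 0 < R := hr.trans hrR
  set t : ℝ := r / R with ht
  have ht0 : 0 < t := div_pos hr hR
  have ht1 : t ≤ 1 := by rw [div_le_one hR]; exact hrR.le
  -- the homothety maps B(x,R) ∩ Ω into B(x,r) ∩ Ω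
  have hsub : AffineMap.homothety x t '' (closedBall x R ∩ Ω) ⊆ closedBall x r ∩ Ω := by
    rintro _ ⟨y, ⟨hyB, hyΩ⟩, rfl⟩
    constructor
    · rw [mem_closedBall] at hyB ⊢
      have : AffineMap.homothety x t y - x = t • (y - x) := by
        simp [AffineMap.homothety_apply, vsub_eq_sub, vadd_eq_add]
      rw [dist_eq_norm, this, norm_smul, Real.norm_eq_abs, abs_of_pos ht0]
      calc t * ‖y - x‖ ≤ t * R := by
            apply mul_le_mul_of_nonneg_left _ ht0.le
            rwa [dist_eq_norm] at hyB
        _ = r := by rw [ht, div_mul_cancel₀ _ hR.ne']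
    · have : AffineMap.homothety x t y = (1 - t) • x + t • y := by
        simp only [AffineMap.homothety_apply, vsub_eq_sub, vadd_eq_add]
        module
      rw [this]
      exact hΩc hx hyΩ (by linarith) ht0.le (by ring)
  have hmeas := MeasureTheory.Measure.addHaar_image_homothety
    (volume : Measure (EuclideanSpace ℝ (Fin n))) x t (closedBall x R ∩ Ω)
  rw [finrank_euclideanSpace_fin, abs_of_nonneg (pow_nonneg ht0.le n)] at hmeas
  have hkey : ENNReal.ofReal (t ^ n) * volume (closedBall x R ∩ Ω) ≤
      volume (closedBall x r ∩ Ω) := by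
    rw [← hmeas]; exact measure_mono hsub
  have hne : volume (closedBall x R ∩ Ω) ≠ 0 := by
    obtain ⟨ε, hε, hball⟩ := Metric.isOpen_iff.1 hΩo x hx
    have hsub2 : ball x (min ε R) ⊆ closedBall x R ∩ Ω := fun y hy =>
      ⟨ball_subset_closedBall (ball_subset_ball (min_le_right _ _) hy),
       hball (ball_subset_ball (min_le_left _ _) hy)⟩
    have := measure_ball_pos volume x (lt_min hε hR)
    exact fun h => absurd (measure_mono_null hsub2 h) this.ne'
  have htop : volume (closedBall x R ∩ Ω) ≠ ⊤ :=
    ((measure_mono inter_subset_left).trans_lt (measure_closedBall_lt_top)).ne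
  rw [ENNReal.le_div_iff_mul_le (Or.inl hne) (Or.inl htop)]
  exact hkey
end

section
/- Let A and B be nonempty measurable subsets of ℝⁿ and t ∈ [0,1]. Then vol((1-t)·A + t·B)^(1/n) ≥ (1-t)·vol(A)^(1/n) + t·vol(B)^(1/n), where (1-t)A + tB = {(1-t)x + ty : x ∈ A, y ∈ B} (assume the Minkowski combination is measurable, or use outer measure). -/
open MeasureTheory Set Pointwise

namespace BrunnMinkowskiAux

open ENNReal NNReal

lemma measure_singleton_add {E : Type*} [AddCommGroup E] [TopologicalSpace E]
    [IsTopologicalAddGroup E] [MeasurableSpace E] [BorelSpace E]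
    (μ : Measure E) [μ.IsAddLeftInvariant] (a : E) (s : Set E) : μ ({a} + s) = μ s := by
  rw [Set.singleton_add, Set.image_add_left, measure_preimage_add]

/-- One-dimensional Brunn–Minkowski: superadditivity of Lebesgue outer measure under
Minkowski addition. -/
lemma one_dim_bm {A B : Set ℝ} (hA : A.Nonempty) (hB : B.Nonempty)
    (hAm : MeasurableSet A) (hBm : MeasurableSet B) :
    volume A + volume B ≤ volume (A + B) := by
  obtain ⟨a0, ha0⟩ := hA
  obtain ⟨b0, hb0⟩ := hB
  have htrA : volume A ≤ volume (A + B) := by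
    calc volume A = volume ({b0} + A) := (measure_singleton_add volume b0 A).symm
    _ ≤ volume (A + B) := by
        refine measure_mono ?_
        rw [add_comm A B]
        exact Set.add_subset_add (singleton_subset_iff.2 hb0) le_rfl
  have htrB : volume B ≤ volume (A + B) := by
    calc volume B = volume ({a0} + B) := (measure_singleton_add volume a0 B).symm
    _ ≤ volume (A + B) :=
        measure_mono (Set.add_subset_add (singleton_subset_iff.2 ha0) le_rfl)
  rcases eq_or_ne (volume A) 0 with hA0 | hA0
  · rw [hA0, zero_add]; exact htrB
  rcases eq_or_ne (volume B) 0 with hB0 | hB0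
  · rw [hB0, add_zero]; exact htrA
  rcases eq_or_ne (volume (A + B)) ∞ with hC | hC
  · rw [hC]; exact le_top
  have key : ∀ K L : Set ℝ, K ⊆ A → L ⊆ B → IsCompact K → K.Nonempty →
      IsCompact L → L.Nonempty → volume K + volume L ≤ volume (A + B) := by
    intro K L hKA hLB hK hKn hL hLn
    set a := sSup K with ha
    set b := sInf L with hb
    have haK : a ∈ K := hK.sSup_mem hKn
    have hbL : b ∈ L := hL.sInf_mem hLn
    set c := a + b with hc
    have hU : volume ({b} + K) = volume K := measure_singleton_add _ _ _
    have hV : volume ({a} + L) = volume L := measure_singleton_add _ _ _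
    have hUsub : {b} + K ⊆ A + B := by
      rw [add_comm A B]
      exact Set.add_subset_add (singleton_subset_iff.2 (hLB hbL)) hKA
    have hVsub : {a} + L ⊆ A + B :=
      Set.add_subset_add (singleton_subset_iff.2 (hKA haK)) hLB
    have hUle : ({b} + K) \ {c} ⊆ Iio c := by
      rintro x ⟨hx, hxne⟩
      rw [Set.mem_add] at hx
      obtain ⟨u, hu, k, hk, rfl⟩ := hx
      rw [mem_singleton_iff] at hu
      subst hu
      have hka : k ≤ a := le_csSup hK.bddAbove hk
      have : b + k ≤ c := by rw [hc]; linarith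
      exact lt_of_le_of_ne this (by simpa using hxne)
    have hVge : {a} + L ⊆ Ici c := by
      intro x hx
      rw [Set.mem_add] at hx
      obtain ⟨u, hu, l, hl, rfl⟩ := hx
      rw [mem_singleton_iff] at hu
      subst hu
      have hbl : b ≤ l := csInf_le hL.bddBelow hl
      rw [mem_Ici, hc]; linarith
    have hdisj : Disjoint (({b} + K) \ {c}) ({a} + L) := by
      refine Set.disjoint_left.2 fun x hxU hxV => ?_
      exact (mem_Iio.1 (hUle hxU)).not_ge (mem_Ici.1 (hVge hxV))
    have hVm : MeasurableSet ({a} + L) := (isCompact_singleton.add hL).measurableSet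
    calc volume K + volume L
        = volume (({b} + K) \ {c}) + volume ({a} + L) := by
          rw [measure_diff_null (measure_singleton c), hU, hV]
      _ = volume ((({b} + K) \ {c}) ∪ ({a} + L)) := (measure_union hdisj hVm).symm
      _ ≤ volume (A + B) :=
          measure_mono (union_subset (diff_subset.trans hUsub) hVsub)
  apply ENNReal.le_of_forall_pos_le_add
  intro ε hε hfin
  have hAfin : volume A ≠ ∞ := (lt_of_le_of_lt htrA hfin).ne
  have hBfin : volume B ≠ ∞ := (lt_of_le_of_lt htrB hfin).ne
  have hε2 : ((ε : ℝ≥0∞) / 2) ≠ 0 := by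
    simp [ENNReal.div_eq_zero_iff, hε.ne']
  obtain ⟨K, hKA, hK, hKv⟩ := hAm.exists_lt_isCompact
    (ENNReal.sub_lt_self hAfin hA0 hε2)
  obtain ⟨L, hLB, hL, hLv⟩ := hBm.exists_lt_isCompact
    (ENNReal.sub_lt_self hBfin hB0 hε2)
  have hKn : K.Nonempty := by
    rw [nonempty_iff_ne_empty]
    rintro rfl
    simp only [measure_empty] at hKv
    exact ENNReal.not_lt_zero hKv
  have hLn : L.Nonempty := by
    rw [nonempty_iff_ne_empty]
    rintro rfl
    simp only [measure_empty] at hLv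
    exact ENNReal.not_lt_zero hLv
  have h1 : volume A ≤ volume K + (ε : ℝ≥0∞) / 2 := by
    rw [← tsub_le_iff_right]; exact hKv.le
  have h2 : volume B ≤ volume L + (ε : ℝ≥0∞) / 2 := by
    rw [← tsub_le_iff_right]; exact hLv.le
  calc volume A + volume B ≤ (volume K + (ε : ℝ≥0∞) / 2) + (volume L + (ε : ℝ≥0∞) / 2) :=
        add_le_add h1 h2
    _ = (volume K + volume L) + (ε : ℝ≥0∞) := by
        rw [add_add_add_comm, ENNReal.add_halves]
    _ ≤ volume (A + B) + (ε : ℝ≥0∞) :=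
        add_le_add (key K L hKA hLB hK hKn hL hLn) le_rfl

lemma iSup_min_nat (c : ℝ≥0∞) : ⨆ M : ℕ, min c (M : ℝ≥0∞) = c := by
  refine le_antisymm (iSup_le fun M => min_le_left _ _) ?_
  rcases eq_or_ne c ∞ with rfl | hc
  · have : ∀ M : ℕ, min (∞ : ℝ≥0∞) (M : ℝ≥0∞) = (M : ℝ≥0∞) := fun M => min_eq_right le_top
    simp only [this]
    rw [ENNReal.iSup_natCast]
  · obtain ⟨M, hM⟩ := ENNReal.exists_nat_gt hc
    exact le_trans (le_of_eq (min_eq_left hM.le).symm) (le_iSup (fun M : ℕ => min c (M : ℝ≥0∞)) M)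

lemma rpow_iSup {p : ℝ} (hp : 0 < p) (f : ℕ → ℝ≥0∞) : (⨆ M, f M) ^ p = ⨆ M, f M ^ p := by
  refine le_antisymm ?_ (iSup_le fun M => ENNReal.rpow_le_rpow (le_iSup f M) hp.le)
  have h : ∀ M, f M ≤ (⨆ M, f M ^ p) ^ p⁻¹ := fun M => by
    rw [← ENNReal.rpow_rpow_inv hp.ne' (f M)]
    exact ENNReal.rpow_le_rpow (le_iSup (fun M => f M ^ p) M) (by positivity)
  calc (⨆ M, f M) ^ p ≤ ((⨆ M, f M ^ p) ^ p⁻¹) ^ p :=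
        ENNReal.rpow_le_rpow (iSup_le h) hp.le
    _ = ⨆ M, f M ^ p := ENNReal.rpow_inv_rpow hp.ne' _

lemma amgm {a b : ℝ≥0∞} {t : ℝ} (ht0 : 0 < t) (ht1 : t < 1) :
    a ^ (1 - t) * b ^ t ≤ ENNReal.ofReal (1 - t) * a + ENNReal.ofReal t * b := by
  have h1t : (0 : ℝ) < 1 - t := by linarith
  rcases eq_or_ne a ∞ with rfl | ha
  · have : ENNReal.ofReal (1 - t) * ∞ = ∞ :=
      ENNReal.mul_top (by simpa using h1t)
    rw [this, top_add]
    exact le_top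
  rcases eq_or_ne b ∞ with rfl | hb
  · have : ENNReal.ofReal t * ∞ = ∞ := ENNReal.mul_top (by simpa using ht0)
    rw [this, add_top]
    exact le_top
  lift a to ℝ≥0 using ha
  lift b to ℝ≥0 using hb
  have hw : Real.toNNReal (1 - t) + Real.toNNReal t = 1 := by
    rw [← Real.toNNReal_add h1t.le ht0.le]
    norm_num
  have key := NNReal.geom_mean_le_arith_mean2_weighted
    (Real.toNNReal (1 - t)) (Real.toNNReal t) a b hw
  have e1 : ((Real.toNNReal (1 - t) : ℝ)) = 1 - t := Real.coe_toNNReal _ h1t.le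
  have e2 : ((Real.toNNReal t : ℝ)) = t := Real.coe_toNNReal _ ht0.le
  rw [e1, e2] at key
  calc (a : ℝ≥0∞) ^ (1 - t) * (b : ℝ≥0∞) ^ t
      = ((a ^ (1 - t) * b ^ t : ℝ≥0) : ℝ≥0∞) := by
        rw [ENNReal.coe_mul, ENNReal.coe_rpow_of_nonneg _ h1t.le,
          ENNReal.coe_rpow_of_nonneg _ ht0.le]
    _ ≤ ((Real.toNNReal (1 - t) * a + Real.toNNReal t * b : ℝ≥0) : ℝ≥0∞) :=
        ENNReal.coe_le_coe.2 key
    _ = ENNReal.ofReal (1 - t) * a + ENNReal.ofReal t * b := by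
        rw [ENNReal.coe_add, ENNReal.coe_mul, ENNReal.coe_mul]
        rfl

lemma vol_smul_real {r : ℝ} (hr : 0 < r) (s : Set ℝ) :
    volume (r • s) = ENNReal.ofReal r * volume s := by
  rw [Measure.addHaar_smul volume r s]
  congr 2
  simp [abs_of_pos hr]

/-- Normalized one-dimensional Prékopa–Leindler. -/
lemma pl_one_norm {t : ℝ} (ht0 : 0 < t) (ht1 : t < 1) {f g h : ℝ → ℝ≥0∞}
    (hf : Measurable f) (hg : Measurable g) (hh : Measurable h)
    (hf1 : ∀ x, f x ≤ 1) (hg1 : ∀ x, g x ≤ 1)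
    (hfs : ⨆ x, f x = 1) (hgs : ⨆ x, g x = 1)
    (hcond : ∀ x y, f x ^ (1 - t) * g y ^ t ≤ h ((1 - t) * x + t * y)) :
    ENNReal.ofReal (1 - t) * (∫⁻ x, f x) + ENNReal.ofReal t * (∫⁻ x, g x) ≤ ∫⁻ x, h x := by
  have h1t : (0 : ℝ) < 1 - t := by linarith
  set h₁ : ℝ → ℝ≥0∞ := fun x => min (h x) 1 with hh₁def
  have hh₁ : Measurable h₁ := hh.min measurable_const
  have hc₁ : ∀ x y, f x ^ (1 - t) * g y ^ t ≤ h₁ ((1 - t) * x + t * y) := fun x y =>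
    le_min (hcond x y) (mul_le_one' (ENNReal.rpow_le_one (hf1 x) h1t.le)
      (ENNReal.rpow_le_one (hg1 y) ht0.le))
  have hle : ∫⁻ x, h₁ x ≤ ∫⁻ x, h x := lintegral_mono fun x => min_le_left _ _
  have hfne : ∀ x, f x ≠ ∞ := fun x => ((hf1 x).trans_lt ENNReal.one_lt_top).ne
  have hgne : ∀ x, g x ≠ ∞ := fun x => ((hg1 x).trans_lt ENNReal.one_lt_top).ne
  have hh₁le : ∀ x, h₁ x ≤ 1 := fun x => min_le_right _ _
  have hh₁ne : ∀ x, h₁ x ≠ ∞ := fun x => ((hh₁le x).trans_lt ENNReal.one_lt_top).ne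
  set F : ℝ → ℝ := fun x => (f x).toReal with hFdef
  set G : ℝ → ℝ := fun x => (g x).toReal with hGdef
  set H : ℝ → ℝ := fun x => (h₁ x).toReal with hHdef
  have hFm : Measurable F := hf.ennreal_toReal
  have hGm : Measurable G := hg.ennreal_toReal
  have hHm : Measurable H := hh₁.ennreal_toReal
  have hfF : ∀ x, f x = ENNReal.ofReal (F x) := fun x => (ENNReal.ofReal_toReal (hfne x)).symm
  have hgG : ∀ x, g x = ENNReal.ofReal (G x) := fun x => (ENNReal.ofReal_toReal (hgne x)).symm
  have hhH : ∀ x, h₁ x = ENNReal.ofReal (H x) := fun x => (ENNReal.ofReal_toReal (hh₁ne x)).symm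
  have lcF : ∫⁻ x, f x = ∫⁻ s in Ioi (0 : ℝ), volume {x | s < F x} := by
    calc ∫⁻ x, f x = ∫⁻ x, ENNReal.ofReal (F x) := lintegral_congr hfF
    _ = _ := lintegral_eq_lintegral_meas_lt volume
        (Filter.Eventually.of_forall fun x => ENNReal.toReal_nonneg) hFm.aemeasurable
  have lcG : ∫⁻ x, g x = ∫⁻ s in Ioi (0 : ℝ), volume {x | s < G x} := by
    calc ∫⁻ x, g x = ∫⁻ x, ENNReal.ofReal (G x) := lintegral_congr hgG
    _ = _ := lintegral_eq_lintegral_meas_lt volume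
        (Filter.Eventually.of_forall fun x => ENNReal.toReal_nonneg) hGm.aemeasurable
  have lcH : ∫⁻ x, h₁ x = ∫⁻ s in Ioi (0 : ℝ), volume {x | s < H x} := by
    calc ∫⁻ x, h₁ x = ∫⁻ x, ENNReal.ofReal (H x) := lintegral_congr hhH
    _ = _ := lintegral_eq_lintegral_meas_lt volume
        (Filter.Eventually.of_forall fun x => ENNReal.toReal_nonneg) hHm.aemeasurable
  have hmF' : Measurable fun s : ℝ => volume {x | s < F x} := by
    refine Antitone.measurable fun s s' hss' => ?_
    exact measure_mono fun x hx => lt_of_le_of_lt hss' hx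
  have hmG' : Measurable fun s : ℝ => volume {x | s < G x} := by
    refine Antitone.measurable fun s s' hss' => ?_
    exact measure_mono fun x hx => lt_of_le_of_lt hss' hx
  have hmH' : Measurable fun s : ℝ => volume {x | s < H x} := by
    refine Antitone.measurable fun s s' hss' => ?_
    exact measure_mono fun x hx => lt_of_le_of_lt hss' hx
  have hpt : ∀ s ∈ Ioi (0 : ℝ),
      ENNReal.ofReal (1 - t) * volume {x | s < F x} + ENNReal.ofReal t * volume {x | s < G x}
        ≤ volume {x | s < H x} := by
    intro s hs
    rw [mem_Ioi] at hs
    rcases le_or_gt 1 s with hs1 | hs1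
    · have hFe : {x | s < F x} = ∅ := by
        refine eq_empty_of_forall_notMem fun x hx => ?_
        have : F x ≤ 1 := by
          simpa using ENNReal.toReal_mono ENNReal.one_ne_top (hf1 x)
        exact absurd (lt_of_lt_of_le hx this) (not_lt.2 hs1)
      have hGe : {x | s < G x} = ∅ := by
        refine eq_empty_of_forall_notMem fun x hx => ?_
        have : G x ≤ 1 := by
          simpa using ENNReal.toReal_mono ENNReal.one_ne_top (hg1 x)
        exact absurd (lt_of_lt_of_le hx this) (not_lt.2 hs1)
      simp [hFe, hGe]
    · set Fs := {x | s < F x} with hFsdef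
      set Gs := {x | s < G x} with hGsdef
      have hFsne : Fs.Nonempty := by
        have hlt : ENNReal.ofReal s < ⨆ x, f x := by
          rw [hfs]; exact ENNReal.ofReal_lt_one.2 hs1
        obtain ⟨x, hx⟩ := lt_iSup_iff.1 hlt
        exact ⟨x, (ENNReal.ofReal_lt_iff_lt_toReal hs.le (hfne x)).1 hx⟩
      have hGsne : Gs.Nonempty := by
        have hlt : ENNReal.ofReal s < ⨆ x, g x := by
          rw [hgs]; exact ENNReal.ofReal_lt_one.2 hs1
        obtain ⟨x, hx⟩ := lt_iSup_iff.1 hlt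
        exact ⟨x, (ENNReal.ofReal_lt_iff_lt_toReal hs.le (hgne x)).1 hx⟩
      have hFsm : MeasurableSet Fs := measurableSet_lt measurable_const hFm
      have hGsm : MeasurableSet Gs := measurableSet_lt measurable_const hGm
      have hσ0 : ENNReal.ofReal s ≠ 0 := (ENNReal.ofReal_pos.2 hs).ne'
      have hsub : (1 - t) • Fs + t • Gs ⊆ {x | s < H x} := by
        rintro z hz
        rw [Set.mem_add] at hz
        obtain ⟨u, hu, v, hv, rfl⟩ := hz
        obtain ⟨x, hx, rfl⟩ := hu
        obtain ⟨y, hy, rfl⟩ := hv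
        have h1 : ENNReal.ofReal s < f x :=
          (ENNReal.ofReal_lt_iff_lt_toReal hs.le (hfne x)).2 hx
        have h2 : ENNReal.ofReal s < g y :=
          (ENNReal.ofReal_lt_iff_lt_toReal hs.le (hgne y)).2 hy
        have hkey : ENNReal.ofReal s < f x ^ (1 - t) * g y ^ t := by
          calc ENNReal.ofReal s = ENNReal.ofReal s ^ (1 - t) * ENNReal.ofReal s ^ t := by
                rw [← ENNReal.rpow_add _ _ hσ0 ENNReal.ofReal_ne_top]
                norm_num
          _ < f x ^ (1 - t) * g y ^ t :=
              ENNReal.mul_lt_mul (ENNReal.rpow_lt_rpow h1 h1t) (ENNReal.rpow_lt_rpow h2 ht0)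
        have hfin := hkey.trans_le (hc₁ x y)
        show s < H ((1 - t) • x + t • y)
        have : (1 - t) • x + t • y = (1 - t) * x + t * y := by
          simp [smul_eq_mul]
        rw [this]
        exact (ENNReal.ofReal_lt_iff_lt_toReal hs.le (hh₁ne _)).1 hfin
      calc ENNReal.ofReal (1 - t) * volume Fs + ENNReal.ofReal t * volume Gs
          = volume ((1 - t) • Fs) + volume (t • Gs) := by
            rw [vol_smul_real h1t Fs, vol_smul_real ht0 Gs]
        _ ≤ volume ((1 - t) • Fs + t • Gs) :=
            one_dim_bm (hFsne.smul_set) (hGsne.smul_set)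
              (hFsm.const_smul₀ (1 - t)) (hGsm.const_smul₀ t)
        _ ≤ volume {x | s < H x} := measure_mono hsub
  have hint : ∫⁻ s in Ioi (0 : ℝ),
      (ENNReal.ofReal (1 - t) * volume {x | s < F x} + ENNReal.ofReal t * volume {x | s < G x})
        ≤ ∫⁻ s in Ioi (0 : ℝ), volume {x | s < H x} :=
    setLIntegral_mono hmH' hpt
  rw [lintegral_add_left (hmF'.const_mul _), lintegral_const_mul _ hmF',
    lintegral_const_mul _ hmG'] at hint
  rw [lcF, lcG]
  exact le_trans hint (le_trans (le_of_eq lcH.symm) hle)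

def PLProp (α : Type*) [AddCommMonoid α] [Module ℝ α] [MeasurableSpace α]
    (μ : Measure α) : Prop :=
  ∀ t : ℝ, 0 < t → t < 1 → ∀ f g h : α → ℝ≥0∞, Measurable f → Measurable g → Measurable h →
    (∀ x y, f x ^ (1 - t) * g y ^ t ≤ h ((1 - t) • x + t • y)) →
    (∫⁻ x, f x ∂μ) ^ (1 - t) * (∫⁻ x, g x ∂μ) ^ t ≤ ∫⁻ x, h x ∂μ

/-- One-dimensional Prékopa–Leindler. -/
lemma pl_one : PLProp ℝ volume := by
  intro t ht0 ht1 f g h hf hg hh hc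
  have h1t : (0 : ℝ) < 1 - t := by linarith
  have main : ∀ M N : ℕ,
      (∫⁻ x, min (f x) (M : ℝ≥0∞)) ^ (1 - t) * (∫⁻ x, min (g x) (N : ℝ≥0∞)) ^ t
        ≤ ∫⁻ x, h x := by
    intro M N
    set f' := fun x => min (f x) (M : ℝ≥0∞) with hf'def
    set g' := fun x => min (g x) (N : ℝ≥0∞) with hg'def
    have hf'm : Measurable f' := hf.min measurable_const
    have hg'm : Measurable g' := hg.min measurable_const
    have hc' : ∀ x y, f' x ^ (1 - t) * g' y ^ t ≤ h ((1 - t) * x + t * y) := by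
      intro x y
      refine le_trans (mul_le_mul'
        (ENNReal.rpow_le_rpow (min_le_left _ _) h1t.le)
        (ENNReal.rpow_le_rpow (min_le_left _ _) ht0.le)) ?_
      have := hc x y
      simpa [smul_eq_mul] using this
    set Sf := ⨆ x, f' x with hSfdef
    set Sg := ⨆ x, g' x with hSgdef
    have hSf_top : Sf ≠ ∞ :=
      ((iSup_le fun x => min_le_right _ _ : Sf ≤ (M : ℝ≥0∞)).trans_lt
        (ENNReal.natCast_lt_top M)).ne
    have hSg_top : Sg ≠ ∞ :=
      ((iSup_le fun x => min_le_right _ _ : Sg ≤ (N : ℝ≥0∞)).trans_lt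
        (ENNReal.natCast_lt_top N)).ne
    rcases eq_or_ne Sf 0 with hSf0 | hSf0
    · have hz : ∀ x, f' x = 0 := fun x =>
        le_antisymm ((le_iSup f' x).trans hSf0.le) zero_le
      have hint : ∫⁻ x, f' x = 0 := by
        rw [lintegral_congr hz, lintegral_zero]
      rw [hint, ENNReal.zero_rpow_of_pos h1t, zero_mul]
      exact zero_le
    rcases eq_or_ne Sg 0 with hSg0 | hSg0
    · have hz : ∀ x, g' x = 0 := fun x =>
        le_antisymm ((le_iSup g' x).trans hSg0.le) zero_le
      have hint : ∫⁻ x, g' x = 0 := by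
        rw [lintegral_congr hz, lintegral_zero]
      rw [hint, ENNReal.zero_rpow_of_pos ht0, mul_zero]
      exact zero_le
    set c := Sf ^ (1 - t) * Sg ^ t with hcdef
    have hc0 : c ≠ 0 := by
      refine mul_ne_zero ?_ ?_
      · exact (ENNReal.rpow_pos (pos_iff_ne_zero.2 hSf0) hSf_top).ne'
      · exact (ENNReal.rpow_pos (pos_iff_ne_zero.2 hSg0) hSg_top).ne'
    have hctop : c ≠ ∞ :=
      ENNReal.mul_ne_top (ENNReal.rpow_ne_top_of_nonneg h1t.le hSf_top)
        (ENNReal.rpow_ne_top_of_nonneg ht0.le hSg_top)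
    set F := fun x => Sf⁻¹ * f' x with hFdef
    set G := fun x => Sg⁻¹ * g' x with hGdef
    set H := fun x => c⁻¹ * h x with hHdef
    have hFm : Measurable F := measurable_const.mul hf'm
    have hGm : Measurable G := measurable_const.mul hg'm
    have hHm : Measurable H := measurable_const.mul hh
    have hF1 : ∀ x, F x ≤ 1 := fun x => by
      rw [← ENNReal.inv_mul_cancel hSf0 hSf_top]
      exact mul_le_mul_right (le_iSup f' x) _
    have hG1 : ∀ x, G x ≤ 1 := fun x => by
      rw [← ENNReal.inv_mul_cancel hSg0 hSg_top]
      exact mul_le_mul_right (le_iSup g' x) _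
    have hFs : ⨆ x, F x = 1 := by
      rw [hFdef]
      rw [← ENNReal.mul_iSup]
      exact ENNReal.inv_mul_cancel hSf0 hSf_top
    have hGs : ⨆ x, G x = 1 := by
      rw [hGdef]
      rw [← ENNReal.mul_iSup]
      exact ENNReal.inv_mul_cancel hSg0 hSg_top
    have halg : ∀ (a b : ℝ≥0∞),
        (Sf⁻¹ * a) ^ (1 - t) * (Sg⁻¹ * b) ^ t = c⁻¹ * (a ^ (1 - t) * b ^ t) := by
      intro a b
      rw [ENNReal.mul_rpow_of_nonneg _ _ h1t.le, ENNReal.mul_rpow_of_nonneg _ _ ht0.le,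
        mul_mul_mul_comm, ENNReal.inv_rpow, ENNReal.inv_rpow,
        ← ENNReal.mul_inv (Or.inl (ENNReal.rpow_pos (pos_iff_ne_zero.2 hSf0) hSf_top).ne')
          (Or.inl (ENNReal.rpow_ne_top_of_nonneg h1t.le hSf_top))]
    have hFGcond : ∀ x y, F x ^ (1 - t) * G y ^ t ≤ H ((1 - t) * x + t * y) := by
      intro x y
      rw [hFdef, hGdef, halg]
      exact mul_le_mul_right (hc' x y) c⁻¹
    have key := pl_one_norm ht0 ht1 hFm hGm hHm hF1 hG1 hFs hGs hFGcond
    have hIF : ∫⁻ x, F x = Sf⁻¹ * ∫⁻ x, f' x := lintegral_const_mul _ hf'm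
    have hIG : ∫⁻ x, G x = Sg⁻¹ * ∫⁻ x, g' x := lintegral_const_mul _ hg'm
    have hIH : ∫⁻ x, H x = c⁻¹ * ∫⁻ x, h x := lintegral_const_mul _ hh
    have key2 : (∫⁻ x, F x) ^ (1 - t) * (∫⁻ x, G x) ^ t ≤ c⁻¹ * ∫⁻ x, h x := by
      rw [← hIH]
      exact le_trans (amgm ht0 ht1) key
    rw [hIF, hIG, halg] at key2
    exact (ENNReal.mul_le_mul_iff_right (ENNReal.inv_ne_zero.2 hctop)
      (ENNReal.inv_ne_top.2 hc0)).1 key2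
  have hfi : ∫⁻ x, f x = ⨆ M : ℕ, ∫⁻ x, min (f x) (M : ℝ≥0∞) := by
    rw [← lintegral_iSup (fun M => hf.min measurable_const)
      (fun M N hMN x => min_le_min le_rfl (Nat.cast_le.2 hMN))]
    exact lintegral_congr fun x => (iSup_min_nat (f x)).symm
  have hgi : ∫⁻ x, g x = ⨆ N : ℕ, ∫⁻ x, min (g x) (N : ℝ≥0∞) := by
    rw [← lintegral_iSup (fun N => hg.min measurable_const)
      (fun M N hMN x => min_le_min le_rfl (Nat.cast_le.2 hMN))]
    exact lintegral_congr fun x => (iSup_min_nat (g x)).symm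
  rw [hfi, hgi, rpow_iSup h1t, rpow_iSup ht0, ENNReal.iSup_mul]
  refine iSup_le fun M => ?_
  rw [ENNReal.mul_iSup]
  exact iSup_le fun N => main M N

lemma pl_transfer {α β : Type*} [MeasurableSpace α] [AddCommMonoid α] [Module ℝ α]
    [MeasurableSpace β] [AddCommMonoid β] [Module ℝ β] {μ : Measure α} {ν : Measure β}
    {e : α → β} (hme : Measurable e) (hmp : MeasurePreserving e μ ν)
    (hlin : ∀ (a b : ℝ) (x y : α), e (a • x + b • y) = a • e x + b • e y)
    (hα : PLProp α μ) : PLProp β ν := by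
  intro t ht0 ht1 f g h hf hg hh hc
  have key := hα t ht0 ht1 (fun a => f (e a)) (fun a => g (e a)) (fun a => h (e a))
    (hf.comp hme) (hg.comp hme) (hh.comp hme)
    (fun x y => by
      simpa [hlin] using hc (e x) (e y))
  rwa [hmp.lintegral_comp hf, hmp.lintegral_comp hg, hmp.lintegral_comp hh] at key

lemma pl_prod {γ : Type*} [MeasurableSpace γ] [AddCommMonoid γ] [Module ℝ γ]
    (ν : Measure γ) [SigmaFinite ν] (hγ : PLProp γ ν) :
    PLProp (ℝ × γ) ((volume : Measure ℝ).prod ν) := by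
  intro t ht0 ht1 f g h hf hg hh hc
  set F := fun c : ℝ => ∫⁻ z, f (c, z) ∂ν with hFdef
  set G := fun c : ℝ => ∫⁻ z, g (c, z) ∂ν with hGdef
  set H := fun c : ℝ => ∫⁻ z, h (c, z) ∂ν with hHdef
  have hFm : Measurable F := hf.lintegral_prod_right'
  have hGm : Measurable G := hg.lintegral_prod_right'
  have hHm : Measurable H := hh.lintegral_prod_right'
  have hcond : ∀ c₁ c₂ : ℝ, F c₁ ^ (1 - t) * G c₂ ^ t ≤ H ((1 - t) • c₁ + t • c₂) := by
    intro c₁ c₂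
    refine hγ t ht0 ht1 (fun z => f (c₁, z)) (fun z => g (c₂, z))
      (fun z => h ((1 - t) • c₁ + t • c₂, z))
      (hf.comp measurable_prodMk_left) (hg.comp measurable_prodMk_left)
      (hh.comp measurable_prodMk_left) ?_
    intro z₁ z₂
    have := hc (c₁, z₁) (c₂, z₂)
    have heq : (1 - t) • ((c₁, z₁) : ℝ × γ) + t • ((c₂, z₂) : ℝ × γ)
        = ((1 - t) • c₁ + t • c₂, (1 - t) • z₁ + t • z₂) := by
      simp [Prod.ext_iff]
    rwa [heq] at this
  have key := pl_one t ht0 ht1 F G H hFm hGm hHm hcond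
  rwa [← lintegral_prod f hf.aemeasurable, ← lintegral_prod g hg.aemeasurable,
    ← lintegral_prod h hh.aemeasurable] at key

lemma pl_pi : ∀ n : ℕ, PLProp (Fin n → ℝ) volume := by
  intro n
  induction n with
  | zero =>
    intro t ht0 ht1 f g h hf hg hh hc
    have huniv : volume (univ : Set (Fin 0 → ℝ)) = 1 := by
      rw [volume_pi, Measure.pi_univ]
      simp
    rw [lintegral_unique, lintegral_unique, lintegral_unique, huniv, mul_one, mul_one, mul_one]
    have h2 : ∀ x y : Fin 0 → ℝ, f x ^ (1 - t) * g y ^ t ≤ h x := fun x y => by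
      have := hc x y
      rwa [Subsingleton.elim ((1 - t) • x + t • y) x] at this
    exact h2 _ _
  | succ n ih =>
    have hstep := pl_prod (volume : Measure (Fin n → ℝ)) ih
    set e : ℝ × (Fin n → ℝ) → (Fin (n + 1) → ℝ) :=
      ⇑(MeasurableEquiv.piFinSuccAbove (fun _ : Fin (n + 1) => ℝ) 0).symm with hedef
    have hme : Measurable e :=
      (MeasurableEquiv.piFinSuccAbove (fun _ : Fin (n + 1) => ℝ) 0).symm.measurable
    have hmp : MeasurePreserving e ((volume : Measure ℝ).prod volume) volume := by
      have h1 := (measurePreserving_piFinSuccAbove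
        (fun _ : Fin (n + 1) => (volume : Measure ℝ)) 0).symm
      have hv1 : (volume : Measure (Fin (n + 1) → ℝ)) = Measure.pi fun _ => volume :=
        volume_pi
      have hv2 : (volume : Measure (Fin n → ℝ)) = Measure.pi fun _ => volume := volume_pi
      rw [hv1, hv2]
      exact h1
    have hlin : ∀ (a b : ℝ) (x y : ℝ × (Fin n → ℝ)),
        e (a • x + b • y) = a • e x + b • e y := by
      intro a b x y
      show Fin.insertNth (α := fun _ : Fin (n + 1) => ℝ) 0 (a • x + b • y).1 (a • x + b • y).2
          = a • Fin.insertNth (α := fun _ : Fin (n + 1) => ℝ) 0 x.1 x.2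
            + b • Fin.insertNth (α := fun _ : Fin (n + 1) => ℝ) 0 y.1 y.2
      funext j
      refine Fin.cases ?_ ?_ j
      · simp [Fin.insertNth_zero]
      · intro i
        simp [Fin.insertNth_zero]
    exact pl_transfer hme hmp hlin hstep

lemma pl_euclidean (n : ℕ) : PLProp (EuclideanSpace ℝ (Fin n)) volume := by
  refine pl_transfer (e := fun x : Fin n → ℝ => (MeasurableEquiv.toLp 2 (Fin n → ℝ)) x)
    (MeasurableEquiv.toLp 2 (Fin n → ℝ)).measurable
    ((EuclideanSpace.volume_preserving_symm_measurableEquiv_toLp (Fin n)).symm _) ?_ (pl_pi n)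
  intro a b x y
  rfl

lemma bm_add {n : ℕ} (hn : 0 < n) {A B : Set (EuclideanSpace ℝ (Fin n))}
    (hA : A.Nonempty) (hB : B.Nonempty) (hAm : MeasurableSet A) (hBm : MeasurableSet B)
    (hABm : MeasurableSet (A + B)) :
    volume A ^ ((1 : ℝ) / n) + volume B ^ ((1 : ℝ) / n) ≤ volume (A + B) ^ ((1 : ℝ) / n) := by
  have hnR : (0 : ℝ) < n := Nat.cast_pos.2 hn
  have hn' : (0 : ℝ) < 1 / n := by positivity
  obtain ⟨a0, ha0⟩ := hA
  obtain ⟨b0, hb0⟩ := hB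
  have htrA : volume A ≤ volume (A + B) := by
    calc volume A = volume ({b0} + A) := (measure_singleton_add volume b0 A).symm
    _ ≤ volume (A + B) := by
        refine measure_mono ?_
        rw [add_comm A B]
        exact Set.add_subset_add (singleton_subset_iff.2 hb0) le_rfl
  have htrB : volume B ≤ volume (A + B) := by
    calc volume B = volume ({a0} + B) := (measure_singleton_add volume a0 B).symm
    _ ≤ volume (A + B) :=
        measure_mono (Set.add_subset_add (singleton_subset_iff.2 ha0) le_rfl)
  rcases eq_or_ne (volume A) 0 with hA0 | hA0
  · rw [hA0, ENNReal.zero_rpow_of_pos hn', zero_add]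
    exact ENNReal.rpow_le_rpow htrB hn'.le
  rcases eq_or_ne (volume B) 0 with hB0 | hB0
  · rw [hB0, ENNReal.zero_rpow_of_pos hn', add_zero]
    exact ENNReal.rpow_le_rpow htrA hn'.le
  rcases eq_or_ne (volume (A + B)) ∞ with hC | hC
  · rw [hC, ENNReal.top_rpow_of_pos hn']
    exact le_top
  have hAfin : volume A ≠ ∞ := (htrA.trans_lt (lt_top_iff_ne_top.2 hC)).ne
  have hBfin : volume B ≠ ∞ := (htrB.trans_lt (lt_top_iff_ne_top.2 hC)).ne
  set u : ℝ := (volume A).toReal ^ ((1 : ℝ) / n) with hu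
  set v : ℝ := (volume B).toReal ^ ((1 : ℝ) / n) with hv
  have hu0 : 0 < u := Real.rpow_pos_of_pos (ENNReal.toReal_pos hA0 hAfin) _
  have hv0 : 0 < v := Real.rpow_pos_of_pos (ENNReal.toReal_pos hB0 hBfin) _
  have huv0 : 0 < u + v := by linarith
  set θ : ℝ := v / (u + v) with hθ
  have hθ0 : 0 < θ := by positivity
  have hθ1 : θ < 1 := by
    rw [hθ, div_lt_one huv0]; linarith
  have h1θ : 1 - θ = u / (u + v) := by
    rw [hθ]; field_simp; ring
  have h1θ0 : 0 < 1 - θ := by linarith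
  set A' := (1 - θ)⁻¹ • A with hA'
  set B' := θ⁻¹ • B with hB'
  have hA'm : MeasurableSet A' := hAm.const_smul₀ (1 - θ)⁻¹
  have hB'm : MeasurableSet B' := hBm.const_smul₀ θ⁻¹
  have hcond : ∀ x y : EuclideanSpace ℝ (Fin n),
      (A'.indicator (1 : EuclideanSpace ℝ (Fin n) → ℝ≥0∞) x) ^ (1 - θ)
          * (B'.indicator (1 : EuclideanSpace ℝ (Fin n) → ℝ≥0∞) y) ^ θ
        ≤ (A + B).indicator (1 : EuclideanSpace ℝ (Fin n) → ℝ≥0∞)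
            ((1 - θ) • x + θ • y) := by
    intro x y
    by_cases hx : x ∈ A'
    · by_cases hy : y ∈ B'
      · have hmem : (1 - θ) • x + θ • y ∈ A + B := by
          obtain ⟨xa, hxa, rfl⟩ := hx
          obtain ⟨yb, hyb, rfl⟩ := hy
          rw [smul_smul, smul_smul, mul_inv_cancel₀ h1θ0.ne', mul_inv_cancel₀ hθ0.ne',
            one_smul, one_smul]
          exact Set.add_mem_add hxa hyb
        rw [indicator_of_mem hx, indicator_of_mem hy, indicator_of_mem hmem]
        simp
      · rw [indicator_of_notMem hy, ENNReal.zero_rpow_of_pos hθ0, mul_zero]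
        exact zero_le
    · rw [indicator_of_notMem hx, ENNReal.zero_rpow_of_pos h1θ0, zero_mul]
      exact zero_le
  have key := pl_euclidean n θ hθ0 hθ1 (A'.indicator (1 : EuclideanSpace ℝ (Fin n) → ℝ≥0∞))
    (B'.indicator (1 : EuclideanSpace ℝ (Fin n) → ℝ≥0∞))
    ((A + B).indicator (1 : EuclideanSpace ℝ (Fin n) → ℝ≥0∞))
    (measurable_one.indicator hA'm) (measurable_one.indicator hB'm)
    (measurable_one.indicator hABm) hcond
  rw [lintegral_indicator_one hA'm, lintegral_indicator_one hB'm,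
    lintegral_indicator_one hABm] at key
  have hvolA' : volume A' = ENNReal.ofReal ((1 - θ)⁻¹ ^ (n : ℝ) * (volume A).toReal) := by
    rw [hA', Measure.addHaar_smul, finrank_euclideanSpace_fin,
      abs_of_nonneg (pow_nonneg (inv_nonneg.2 h1θ0.le) n),
      ← ENNReal.ofReal_toReal hAfin, ← ENNReal.ofReal_mul (pow_nonneg (inv_nonneg.2 h1θ0.le) n),
      ENNReal.ofReal_toReal hAfin]
    rw [← Real.rpow_natCast (1 - θ)⁻¹ n]
  have hvolB' : volume B' = ENNReal.ofReal (θ⁻¹ ^ (n : ℝ) * (volume B).toReal) := by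
    rw [hB', Measure.addHaar_smul, finrank_euclideanSpace_fin,
      abs_of_nonneg (pow_nonneg (inv_nonneg.2 hθ0.le) n),
      ← ENNReal.ofReal_toReal hBfin, ← ENNReal.ofReal_mul (pow_nonneg (inv_nonneg.2 hθ0.le) n),
      ENNReal.ofReal_toReal hBfin]
    rw [← Real.rpow_natCast θ⁻¹ n]
  have huA : (volume A).toReal = u ^ (n : ℝ) := by
    rw [hu, ← Real.rpow_mul ENNReal.toReal_nonneg, one_div, inv_mul_cancel₀ hnR.ne',
      Real.rpow_one]
  have hvB : (volume B).toReal = v ^ (n : ℝ) := by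
    rw [hv, ← Real.rpow_mul ENNReal.toReal_nonneg, one_div, inv_mul_cancel₀ hnR.ne',
      Real.rpow_one]
  have hPA : (1 - θ)⁻¹ ^ (n : ℝ) * (volume A).toReal = (u + v) ^ (n : ℝ) := by
    rw [huA, ← Real.mul_rpow (inv_nonneg.2 h1θ0.le) hu0.le]
    congr 1
    rw [h1θ]
    field_simp
  have hPB : θ⁻¹ ^ (n : ℝ) * (volume B).toReal = (u + v) ^ (n : ℝ) := by
    rw [hvB, ← Real.mul_rpow (inv_nonneg.2 hθ0.le) hv0.le]
    congr 1
    rw [hθ]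
    field_simp
  have hw0 : (0 : ℝ) < (u + v) ^ (n : ℝ) := Real.rpow_pos_of_pos huv0 _
  have key2 : ENNReal.ofReal ((u + v) ^ (n : ℝ)) ≤ volume (A + B) := by
    calc ENNReal.ofReal ((u + v) ^ (n : ℝ))
        = ENNReal.ofReal (((u + v) ^ (n : ℝ)) ^ (1 - θ) * ((u + v) ^ (n : ℝ)) ^ θ) := by
          rw [← Real.rpow_add hw0, sub_add_cancel, Real.rpow_one]
      _ = (ENNReal.ofReal ((u + v) ^ (n : ℝ))) ^ (1 - θ)
            * (ENNReal.ofReal ((u + v) ^ (n : ℝ))) ^ θ := by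
          rw [ENNReal.ofReal_rpow_of_pos hw0, ENNReal.ofReal_rpow_of_pos hw0,
            ← ENNReal.ofReal_mul (Real.rpow_nonneg hw0.le _)]
      _ = volume A' ^ (1 - θ) * volume B' ^ θ := by
          rw [hvolA', hvolB', hPA, hPB]
      _ ≤ volume (A + B) := key
  calc volume A ^ ((1 : ℝ) / n) + volume B ^ ((1 : ℝ) / n)
      = ENNReal.ofReal u + ENNReal.ofReal v := by
        rw [← ENNReal.ofReal_toReal hAfin, ← ENNReal.ofReal_toReal hBfin,
          ENNReal.ofReal_rpow_of_pos (ENNReal.toReal_pos hA0 hAfin),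
          ENNReal.ofReal_rpow_of_pos (ENNReal.toReal_pos hB0 hBfin)]
    _ = ENNReal.ofReal (u + v) := (ENNReal.ofReal_add hu0.le hv0.le).symm
    _ = ENNReal.ofReal (((u + v) ^ (n : ℝ)) ^ ((1 : ℝ) / n)) := by
        congr 1
        rw [← Real.rpow_mul huv0.le, mul_one_div, div_self hnR.ne', Real.rpow_one]
    _ = ENNReal.ofReal ((u + v) ^ (n : ℝ)) ^ ((1 : ℝ) / n) :=
        (ENNReal.ofReal_rpow_of_pos hw0).symm
    _ ≤ volume (A + B) ^ ((1 : ℝ) / n) := ENNReal.rpow_le_rpow key2 hn'.le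

end BrunnMinkowskiAux

/-- Brunn–Minkowski inequality in ℝⁿ. -/
theorem brunn_minkowski (n : ℕ) (hn : 0 < n) (A B : Set (EuclideanSpace ℝ (Fin n)))
    (hA : A.Nonempty) (hB : B.Nonempty) (hAm : MeasurableSet A) (hBm : MeasurableSet B)
    (t : ℝ) (ht0 : 0 ≤ t) (ht1 : t ≤ 1)
    (hm : MeasurableSet ((1 - t) • A + t • B)) :
    ENNReal.ofReal (1 - t) * volume A ^ ((1 : ℝ) / n) +
      ENNReal.ofReal t * volume B ^ ((1 : ℝ) / n) ≤
      volume ((1 - t) • A + t • B) ^ ((1 : ℝ) / n) := by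
  open BrunnMinkowskiAux in
  have hnR : (0 : ℝ) < n := Nat.cast_pos.2 hn
  have hn' : (0 : ℝ) < 1 / n := by positivity
  rcases ht0.eq_or_lt with rfl | ht0'
  · rw [sub_zero, one_smul, Set.zero_smul_set hB, add_zero]
    simp
  rcases ht1.eq_or_lt with rfl | ht1'
  · rw [sub_self, Set.zero_smul_set hA, one_smul, zero_add]
    simp
  have h1t : (0 : ℝ) < 1 - t := by linarith
  have hA' : ((1 - t) • A).Nonempty := hA.smul_set
  have hB' : (t • B).Nonempty := hB.smul_set
  have hA'm : MeasurableSet ((1 - t) • A) := hAm.const_smul₀ (1 - t)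
  have hB'm : MeasurableSet (t • B) := hBm.const_smul₀ t
  have key := BrunnMinkowskiAux.bm_add hn hA' hB' hA'm hB'm hm
  have hsA : volume ((1 - t) • A) ^ ((1 : ℝ) / n)
      = ENNReal.ofReal (1 - t) * volume A ^ ((1 : ℝ) / n) := by
    rw [Measure.addHaar_smul, finrank_euclideanSpace_fin,
      abs_of_nonneg (pow_nonneg h1t.le n),
      ENNReal.mul_rpow_of_nonneg _ _ hn'.le]
    congr 1
    rw [← Real.rpow_natCast (1 - t) n, ← ENNReal.ofReal_rpow_of_pos h1t,
      ← ENNReal.rpow_mul]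
    rw [mul_one_div, div_self hnR.ne', ENNReal.rpow_one]
  have hsB : volume (t • B) ^ ((1 : ℝ) / n)
      = ENNReal.ofReal t * volume B ^ ((1 : ℝ) / n) := by
    rw [Measure.addHaar_smul, finrank_euclideanSpace_fin,
      abs_of_nonneg (pow_nonneg ht0'.le n),
      ENNReal.mul_rpow_of_nonneg _ _ hn'.le]
    congr 1
    rw [← Real.rpow_natCast t n, ← ENNReal.ofReal_rpow_of_pos ht0',
      ← ENNReal.rpow_mul]
    rw [mul_one_div, div_self hnR.ne', ENNReal.rpow_one]
  rw [← hsA, ← hsB]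
  exact key
end
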